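/- Let n ≥ 2 and let ℓ : EuclideanSpace ℝ (Fin n) → ℝ be nonnegative and differentiable at every s ≠ 0, and suppose that for all s ≠ 0: (i) s = ℓ(s) • (gradient ℓ s), and (ii) ℓ(gradient ℓ s) = 1. Then ℓ(s) = ‖s‖ for all s ≠ 0. -/

import Mathlib

/-- If a nonnegative function `ℓ` on `ℝⁿ` (`n ≥ 2`), differentiable away from `0`,
satisfies `s = ℓ(s) • ∇ℓ(s)` and `ℓ(∇ℓ(s)) = 1` for all `s ≠ 0`, then `ℓ` is the
Euclidean norm away from `0`. -/
theorem unital_norm_eq_euclidean_norm {n : ℕ} (hn : 2 ≤ n)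
    (ℓ : EuclideanSpace ℝ (Fin n) → ℝ)
    (hpos : ∀ s : EuclideanSpace ℝ (Fin n), s ≠ 0 → 0 ≤ ℓ s)
    (hdiff : ∀ s : EuclideanSpace ℝ (Fin n), s ≠ 0 → DifferentiableAt ℝ ℓ s)
    (heq : ∀ s : EuclideanSpace ℝ (Fin n), s ≠ 0 → s = ℓ s • gradient ℓ s)
    (hnorm : ∀ s : EuclideanSpace ℝ (Fin n), s ≠ 0 → ℓ (gradient ℓ s) = 1) :
    ∀ s : EuclideanSpace ℝ (Fin n), s ≠ 0 → ℓ s = ‖s‖ := by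
  -- positivity of ℓ away from 0
  have hlpos : ∀ x : EuclideanSpace ℝ (Fin n), x ≠ 0 → 0 < ℓ x := by
    intro x hx
    rcases (hpos x hx).lt_or_eq with h | h
    · exact h
    · exfalso; apply hx
      rw [heq x hx, ← h, zero_smul]
  -- gradient formula
  have hgrad : ∀ x : EuclideanSpace ℝ (Fin n), x ≠ 0 →
      gradient ℓ x = (ℓ x)⁻¹ • x := by
    intro x hx
    have hl := (hlpos x hx).ne'
    symm
    rw [inv_smul_eq_iff₀ hl]
    exact heq x hx
  intro s hs
  set b : ℝ := ‖s‖ ^ 2 with hb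
  have hbpos : 0 < b := pow_pos (norm_pos_iff.mpr hs) 2
  -- derivative of t ↦ ℓ (t • s) for t > 0
  have hderiv : ∀ t : ℝ, 0 < t →
      HasDerivAt (fun t : ℝ => ℓ (t • s)) (t * b / ℓ (t • s)) t := by
    intro t ht
    have hx : t • s ≠ 0 := smul_ne_zero ht.ne' hs
    have hG := (hdiff _ hx).hasGradientAt
    have hF := hG.hasFDerivAt
    have hline : HasDerivAt (fun t : ℝ => t • s) s t := by
      simpa using (hasDerivAt_id t).smul_const s
    have := hF.comp_hasDerivAt t hline
    have hval : (InnerProductSpace.toDual ℝ _ (gradient ℓ (t • s))) s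
        = t * b / ℓ (t • s) := by
      rw [InnerProductSpace.toDual_apply_apply, hgrad _ hx, real_inner_smul_left,
        real_inner_smul_left, real_inner_self_eq_norm_sq]
      field_simp [hb]
      rw [hb]
    rwa [hval] at this
  -- F t = ℓ(t•s)^2 - t^2 b has zero derivative on Ioi 0
  set F : ℝ → ℝ := fun t => ℓ (t • s) ^ 2 - t ^ 2 * b with hFdef
  have hF0 : ∀ t : ℝ, 0 < t → HasDerivAt F 0 t := by
    intro t ht
    have hx : t • s ≠ 0 := smul_ne_zero ht.ne' hs
    have hl := hlpos _ hx
    have h1 := (hderiv t ht).pow 2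
    have h2 : HasDerivAt (fun t : ℝ => t ^ 2 * b) (2 * t * b) t := by
      simpa [mul_comm] using ((hasDerivAt_pow 2 t).mul_const b)
    have h3 := h1.sub h2
    have : (2 : ℕ) * ℓ (t • s) ^ (2 - 1) * (t * b / ℓ (t • s)) - 2 * t * b = 0 := by
      field_simp
      ring
    rwa [this] at h3
  -- F is constant on Ioi 0
  have hconst : ∀ t : ℝ, 0 < t → F t = F 1 := by
    intro t ht
    have hdiffOn : DifferentiableOn ℝ F (Set.Ioi 0) := fun x hx =>
      (hF0 x hx).differentiableAt.differentiableWithinAt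
    refine (convex_Ioi (0 : ℝ)).is_const_of_fderivWithin_eq_zero hdiffOn ?_ ht
      (Set.mem_Ioi.mpr one_pos)
    intro x hx
    have := (hF0 x hx).hasFDerivAt
    rw [this.hasFDerivWithinAt.fderivWithin (isOpen_Ioi.uniqueDiffOn x hx)]
    ext; simp
  set K : ℝ := ℓ s ^ 2 - b with hK
  have hFval : ∀ t : ℝ, 0 < t → ℓ (t • s) ^ 2 = t ^ 2 * b + K := by
    intro t ht
    have := hconst t ht
    simp only [hFdef, one_smul, one_pow] at this
    rw [hK]; linarith
  -- key relation: K * (t^2 * b + K - 1) = 0 for all t > 0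
  have hkey : ∀ t : ℝ, 0 < t → K * (t ^ 2 * b + K - 1) = 0 := by
    intro t ht
    have hx : t • s ≠ 0 := smul_ne_zero ht.ne' hs
    have hl := hlpos _ hx
    have hgx : gradient ℓ (t • s) = (t / ℓ (t • s)) • s := by
      rw [hgrad _ hx, smul_smul]; congr 1; field_simp
    have hu : 0 < t / ℓ (t • s) := div_pos ht hl
    have h1 : ℓ ((t / ℓ (t • s)) • s) = 1 := by
      rw [← hgx]; exact hnorm _ hx
    have h2 := hFval _ hu
    rw [h1] at h2
    have h3 := hFval t ht
    have hl2 : ℓ (t • s) ≠ 0 := hl.ne'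
    field_simp at h2
    nlinarith [h2, h3]
  have h1 := hkey 1 one_pos
  have h2 := hkey 2 two_pos
  have hK0 : K = 0 := by
    by_contra hK0
    have e1 : 1 ^ 2 * b + K - 1 = 0 := by
      rcases mul_eq_zero.mp h1 with h | h
      · exact absurd h hK0
      · exact h
    have e2 : 2 ^ 2 * b + K - 1 = 0 := by
      rcases mul_eq_zero.mp h2 with h | h
      · exact absurd h hK0
      · exact h
    nlinarith
  have : ℓ s ^ 2 = ‖s‖ ^ 2 := by rw [hK] at hK0; linarith [hK0]
  have hln := hpos s hs
  nlinarith [norm_nonneg s, this]
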